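/- Let g : ℝ → ℝ admit an entire complex extension with g(0) = d_0, let n ≥ 1 be an integer, a > 0, and set f(x) = x^{n-1} g(x). Then the limit as ω → 0⁺ of (∫_0^a f(x)/(ω + x)^n dx)/(-ln ω) exists and equals d_0; that is, when f has a zero of order n−1 at the origin, ∫_0^a f(x)/(ω + x)^n dx ~ -d_0 ln ω as ω → 0⁺. -/

import Mathlib

open Filter MeasureTheory Set

lemma aux_pow (k : ℕ) {a b : ℝ} (ha : 0 ≤ a) (hab : a ≤ b) :
    b ^ (k + 1) - a ^ (k + 1) ≤ (k + 1 : ℝ) * (b - a) * b ^ k := by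
  induction k with
  | zero => norm_num
  | succ k ih =>
    have hb : 0 ≤ b := ha.trans hab
    have h2 : a ^ (k + 1) ≤ b ^ (k + 1) := pow_le_pow_left₀ ha hab _
    have h3 : b * (b ^ (k + 1) - a ^ (k + 1)) ≤ b * ((k + 1 : ℝ) * (b - a) * b ^ k) :=
      mul_le_mul_of_nonneg_left ih hb
    have h4 : a ^ (k + 1) * (b - a) ≤ b ^ (k + 1) * (b - a) :=
      mul_le_mul_of_nonneg_right h2 (sub_nonneg.2 hab)
    have hid : b ^ (k + 1 + 1) - a ^ (k + 1 + 1)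
        = b * (b ^ (k + 1) - a ^ (k + 1)) + a ^ (k + 1) * (b - a) := by ring
    have hid2 : b * ((k + 1 : ℝ) * (b - a) * b ^ k) + b ^ (k + 1) * (b - a)
        = ((k : ℝ) + 1 + 1) * (b - a) * b ^ (k + 1) := by ring
    push_cast
    linarith [h3, h4]

lemma aux_ptwise (C d₀ ω x gx : ℝ) (m : ℕ) (hω : 0 < ω) (hx : 0 ≤ x)
    (hC : 0 ≤ C) (hg : |gx - d₀| ≤ C * x) :
    |x ^ m * gx / (ω + x) ^ (m + 1) - d₀ * (ω + x)⁻¹| ≤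
      C + |d₀| * m * (ω * ((ω + x) ^ 2)⁻¹) := by
  have hp : 0 < ω + x := by linarith
  have hpn : ((ω + x) : ℝ) ^ (m + 1) ≠ 0 := by positivity
  have h1 : x ^ m * gx / (ω + x) ^ (m + 1) - d₀ * (ω + x)⁻¹ =
      x ^ m * (gx - d₀) / (ω + x) ^ (m + 1) +
        d₀ * ((x ^ m - (ω + x) ^ m) / (ω + x) ^ (m + 1)) := by
    field_simp
    ring
  rw [h1]
  refine (abs_add_le _ _).trans (add_le_add ?_ ?_)
  · rw [abs_div, abs_mul, abs_pow, abs_of_nonneg hx, abs_of_pos (pow_pos hp _),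
      div_le_iff₀ (pow_pos hp _)]
    calc x ^ m * |gx - d₀| ≤ x ^ m * (C * x) :=
          mul_le_mul_of_nonneg_left hg (pow_nonneg hx m)
      _ = C * x ^ (m + 1) := by ring
      _ ≤ C * (ω + x) ^ (m + 1) :=
          mul_le_mul_of_nonneg_left (pow_le_pow_left₀ hx (by linarith) _) hC
  · rw [abs_mul, mul_assoc]
    refine mul_le_mul_of_nonneg_left ?_ (abs_nonneg d₀)
    rw [abs_div, abs_of_pos (pow_pos hp _), abs_sub_comm,
      abs_of_nonneg (sub_nonneg.2 (pow_le_pow_left₀ hx (by linarith) m))]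
    cases m with
    | zero => simp
    | succ k =>
      have hnum : (ω + x) ^ (k + 1) - x ^ (k + 1) ≤ (k + 1 : ℝ) * ω * (ω + x) ^ k := by
        have h := aux_pow k hx (by linarith : x ≤ ω + x)
        have : ω + x - x = ω := by ring
        rw [this] at h
        exact h
      calc ((ω + x) ^ (k + 1) - x ^ (k + 1)) / (ω + x) ^ (k + 1 + 1)
          ≤ ((k + 1 : ℝ) * ω * (ω + x) ^ k) / (ω + x) ^ (k + 1 + 1) := by gcongr
        _ = (↑(k + 1) : ℝ) * (ω * ((ω + x) ^ 2)⁻¹) := by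
            push_cast
            field_simp
            ring


/-- For `g` with entire complex extension, `n ≥ 1`, `a > 0` and `f(x) = x^{n-1} g(x)`,
`(∫_0^a f(x)/(ω+x)^n dx)/(−ln ω) → g(0)` as `ω → 0⁺` within `(0, a)`. -/
theorem stmt_14 (g : ℝ → ℝ) (G : ℂ → ℂ)
    (hG : Differentiable ℂ G) (hGg : ∀ x : ℝ, G x = g x)
    (d₀ : ℝ) (hd₀ : g 0 = d₀)
    (n : ℕ) (hn : 1 ≤ n) (a : ℝ) (ha : 0 < a) :
    Tendsto
      (fun ω : ℝ =>
        (∫ x in (0 : ℝ)..a, x ^ (n - 1) * g x / (ω + x) ^ n) / (-Real.log ω))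
      (nhdsWithin 0 (Set.Ioo 0 a)) (nhds d₀) := by
  obtain ⟨m, rfl⟩ : ∃ m, n = m + 1 := ⟨n - 1, (Nat.succ_pred_eq_of_pos hn).symm⟩
  simp only [Nat.add_sub_cancel]
  -- continuity of g
  have hgc : Continuous g := by
    have h1 : Continuous fun x : ℝ => (G x).re :=
      Complex.continuous_re.comp (hG.continuous.comp Complex.continuous_ofReal)
    have h2 : (fun x : ℝ => (G x).re) = g := by
      funext x; rw [hGg x, Complex.ofReal_re]
    rwa [h2] at h1
  -- linear bound on |g x - d₀|
  have hds : ContinuousOn (dslope G 0) (Complex.ofReal '' Icc (0:ℝ) a) :=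
    (((continuousOn_dslope univ_mem).mpr
      ⟨hG.continuous.continuousOn, hG 0⟩).mono (subset_univ _))
  obtain ⟨C, hC⟩ := (isCompact_Icc.image Complex.continuous_ofReal).exists_bound_of_continuousOn hds
  have hC0 : 0 ≤ C := le_trans (norm_nonneg _)
    (hC _ ⟨0, ⟨left_mem_Icc.2 ha.le, Complex.ofReal_zero⟩⟩)
  have hlin : ∀ x ∈ Icc (0:ℝ) a, |g x - d₀| ≤ C * x := by
    intro x hx
    have h0 : G 0 = (d₀ : ℂ) := by
      rw [← hd₀, ← hGg 0]; norm_num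
    have h1 : ((g x - d₀ : ℝ) : ℂ) = G x - G 0 := by
      push_cast; rw [hGg x, h0]
    have h2 : G (x : ℂ) - G 0 = (x : ℂ) • dslope G 0 (x : ℂ) := by
      have h3 := sub_smul_dslope G 0 (x : ℂ)
      rw [sub_zero] at h3
      exact h3.symm
    have h4 : |g x - d₀| = ‖((g x - d₀ : ℝ) : ℂ)‖ := by
      rw [Complex.norm_real, Real.norm_eq_abs]
    rw [h4, h1, h2, norm_smul, Complex.norm_real, Real.norm_eq_abs, abs_of_nonneg hx.1]
    rw [mul_comm]
    exact mul_le_mul_of_nonneg_right (hC _ ⟨x, hx, rfl⟩) hx.1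
  -- key estimate
  have key : ∀ ω ∈ Ioo (0:ℝ) a,
      |(∫ x in (0:ℝ)..a, x ^ m * g x / (ω + x) ^ (m + 1)) -
        d₀ * (Real.log (ω + a) - Real.log ω)| ≤ C * a + |d₀| * m := by
    intro ω hω
    have hω0 : 0 < ω := hω.1
    have hpos : ∀ x ∈ Icc (0:ℝ) a, 0 < ω + x := fun x hx => by
      have := hx.1; linarith
    have huIcc : uIcc (0:ℝ) a = Icc 0 a := uIcc_of_le ha.le
    have cont1 : ContinuousOn (fun x => x ^ m * g x / (ω + x) ^ (m + 1)) (uIcc 0 a) := by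
      rw [huIcc]
      exact ContinuousOn.div (((continuous_pow m).mul hgc).continuousOn)
        (((continuous_const.add continuous_id).pow _).continuousOn)
        (fun x hx => pow_ne_zero _ (hpos x hx).ne')
    have int1 : IntervalIntegrable (fun x => x ^ m * g x / (ω + x) ^ (m + 1)) volume 0 a :=
      cont1.intervalIntegrable
    have cont2 : ContinuousOn (fun x : ℝ => d₀ * (ω + x)⁻¹) (uIcc 0 a) := by
      rw [huIcc]
      exact continuousOn_const.mul (ContinuousOn.inv₀
        ((continuous_const.add continuous_id).continuousOn)
        (fun x hx => (hpos x hx).ne'))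
    have int2 : IntervalIntegrable (fun x : ℝ => d₀ * (ω + x)⁻¹) volume 0 a :=
      cont2.intervalIntegrable
    have eq2 : (∫ x in (0:ℝ)..a, d₀ * (ω + x)⁻¹)
        = d₀ * (Real.log (ω + a) - Real.log ω) := by
      rw [intervalIntegral.integral_const_mul]
      congr 1
      have h := intervalIntegral.integral_comp_add_left (a := (0:ℝ)) (b := a)
        (fun y : ℝ => y⁻¹) ω
      rw [add_zero] at h
      have hne : (0:ℝ) ∉ Set.uIcc ω (ω + a) := by
        rw [Set.uIcc_of_le (by linarith)]
        intro hmem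
        exact absurd hmem.1 (not_le.2 hω0)
      rw [h, integral_inv hne, Real.log_div (by linarith) hω0.ne']
    have intInv : IntervalIntegrable (fun x : ℝ => ((ω + x) ^ 2)⁻¹) volume 0 a := by
      apply ContinuousOn.intervalIntegrable
      rw [huIcc]
      exact ContinuousOn.inv₀
        (((continuous_const.add continuous_id).pow 2).continuousOn)
        (fun x hx => pow_ne_zero _ (hpos x hx).ne')
    have eqInv : (∫ x in (0:ℝ)..a, ((ω + x) ^ 2)⁻¹) = ω⁻¹ - (ω + a)⁻¹ := by
      have h := intervalIntegral.integral_comp_add_left (a := (0:ℝ)) (b := a)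
        (fun y : ℝ => (y ^ 2)⁻¹) ω
      rw [add_zero] at h
      rw [h]
      have hfeq : (fun y : ℝ => (y ^ 2)⁻¹) = fun y : ℝ => y ^ (-2 : ℤ) := by
        funext y
        rw [zpow_neg]
        norm_num
      have hne : (0:ℝ) ∉ Set.uIcc ω (ω + a) := by
        rw [Set.uIcc_of_le (by linarith)]
        intro hmem
        exact absurd hmem.1 (not_le.2 hω0)
      rw [hfeq, integral_zpow (Or.inr ⟨by norm_num, hne⟩)]
      norm_num
      ring
    have intb : IntervalIntegrable
        (fun x : ℝ => C + |d₀| * m * (ω * ((ω + x) ^ 2)⁻¹)) volume 0 a :=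
      intervalIntegrable_const.add ((intInv.const_mul ω).const_mul _)
    have eqb : (∫ x in (0:ℝ)..a, (C + |d₀| * m * (ω * ((ω + x) ^ 2)⁻¹)))
        = C * a + |d₀| * m * (ω * (ω⁻¹ - (ω + a)⁻¹)) := by
      rw [intervalIntegral.integral_add intervalIntegrable_const
          ((intInv.const_mul ω).const_mul _),
        intervalIntegral.integral_const, intervalIntegral.integral_const_mul,
        intervalIntegral.integral_const_mul, eqInv]
      simp [smul_eq_mul]
      ring
    have hbound : |(∫ x in (0:ℝ)..a, x ^ m * g x / (ω + x) ^ (m + 1)) -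
        d₀ * (Real.log (ω + a) - Real.log ω)|
        ≤ C * a + |d₀| * m * (ω * (ω⁻¹ - (ω + a)⁻¹)) := by
      rw [← eq2, ← intervalIntegral.integral_sub int1 int2, ← eqb]
      refine (intervalIntegral.abs_integral_le_integral_abs ha.le).trans ?_
      refine intervalIntegral.integral_mono_on ha.le (int1.sub int2).abs intb ?_
      intro x hx
      exact aux_ptwise C d₀ ω x (g x) m hω0 hx.1 hC0 (hlin x hx)
    refine hbound.trans ?_
    have h1 : ω * (ω⁻¹ - (ω + a)⁻¹) ≤ 1 := by
      rw [mul_sub, mul_inv_cancel₀ hω0.ne']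
      have : 0 ≤ ω * (ω + a)⁻¹ := by positivity
      linarith
    have h2 : 0 ≤ (|d₀| * m : ℝ) := by positivity
    nlinarith [mul_le_mul_of_nonneg_left h1 h2]
  -- final limit argument
  set M' : ℝ := C * a + |d₀| * m + |d₀| * (|Real.log a| + |Real.log (2 * a)|) with hM'
  rw [← tendsto_sub_nhds_zero_iff]
  have hlogtop : Tendsto (fun ω : ℝ => -Real.log ω) (nhdsWithin 0 (Ioo 0 a)) atTop := by
    refine (tendsto_neg_atBot_atTop.comp Real.tendsto_log_nhdsGT_zero).mono_left ?_
    exact nhdsWithin_mono _ (fun x hx => hx.1)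
  have htend0 : Tendsto (fun ω : ℝ => M' * (-Real.log ω)⁻¹) (nhdsWithin 0 (Ioo 0 a)) (nhds 0) := by
    have := hlogtop.inv_tendsto_atTop.const_mul M'
    simpa using this
  refine squeeze_zero_norm' ?_ htend0
  have h1 : ∀ᶠ ω : ℝ in nhdsWithin 0 (Ioo 0 a), ω < 1 :=
    Filter.Eventually.filter_mono nhdsWithin_le_nhds (eventually_lt_nhds one_pos)
  filter_upwards [self_mem_nhdsWithin, h1] with ω hω hω1
  have hω0 : 0 < ω := hω.1
  have hlogneg : Real.log ω < 0 := Real.log_neg hω0 hω1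
  have hlogpos : 0 < -Real.log ω := by linarith
  have hlogne : Real.log ω ≠ 0 := ne_of_lt hlogneg
  have heq : (∫ x in (0:ℝ)..a, x ^ m * g x / (ω + x) ^ (m + 1)) / (-Real.log ω) - d₀
      = ((∫ x in (0:ℝ)..a, x ^ m * g x / (ω + x) ^ (m + 1)) -
          d₀ * (Real.log (ω + a) - Real.log ω) + d₀ * Real.log (ω + a))
        * (-Real.log ω)⁻¹ := by
    calc (∫ x in (0:ℝ)..a, x ^ m * g x / (ω + x) ^ (m + 1)) / (-Real.log ω) - d₀
        = (∫ x in (0:ℝ)..a, x ^ m * g x / (ω + x) ^ (m + 1)) * (-Real.log ω)⁻¹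
            - d₀ * (-Real.log ω) * (-Real.log ω)⁻¹ := by
          rw [div_eq_mul_inv, mul_inv_cancel_right₀ (neg_ne_zero.2 hlogne)]
      _ = ((∫ x in (0:ℝ)..a, x ^ m * g x / (ω + x) ^ (m + 1)) -
            d₀ * (Real.log (ω + a) - Real.log ω) + d₀ * Real.log (ω + a))
          * (-Real.log ω)⁻¹ := by ring
  rw [Real.norm_eq_abs, heq, abs_mul, abs_inv, abs_of_pos hlogpos]
  refine mul_le_mul_of_nonneg_right ?_ (inv_nonneg.2 hlogpos.le)
  have hlog1 : Real.log (ω + a) ≤ Real.log (2 * a) :=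
    Real.log_le_log (by linarith) (by linarith [hω.2])
  have hlog2 : Real.log a ≤ Real.log (ω + a) :=
    Real.log_le_log ha (by linarith)
  have hlogabs : |Real.log (ω + a)| ≤ |Real.log a| + |Real.log (2 * a)| := by
    rw [abs_le]
    constructor
    · have := neg_abs_le (Real.log a)
      have := abs_nonneg (Real.log (2 * a))
      linarith
    · have := le_abs_self (Real.log (2 * a))
      have := abs_nonneg (Real.log a)
      linarith
  have t2 : |d₀ * Real.log (ω + a)| ≤ |d₀| * (|Real.log a| + |Real.log (2 * a)|) := by
    rw [abs_mul]
    exact mul_le_mul_of_nonneg_left hlogabs (abs_nonneg d₀)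
  have t1 := key ω hω
  refine (abs_add_le _ _).trans ?_
  rw [hM']
  linarith
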